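/- Let Φ : ℝ^n → ℝ^{m+1} be continuous, let Γ = {x ∈ ℝ^n : Φ(x) ∈ Q}, and let x̄ ∈ Γ with Φ(x̄) ∈ bd(Q)\{0}. Define ψ : ℝ^{m+1} → ℝ² by ψ(s₀,s_r) = (‖s_r‖² − s₀², −s₀). If there exist κ > 0 and a neighborhood U of x̄ such that dist(x;Γ) ≤ κ·dist(Φ(x);Q) for all x ∈ U, then there exist κ' > 0 and a neighborhood V of x̄ such that dist(x;Γ) ≤ κ'·dist(ψ(Φ(x)); ℝ²₋) for all x ∈ V, where ℝ²₋ = (−∞,0]². That is, metric subregularity of x ↦ Φ(x) − Q at (x̄,0) implies metric subregularity of x ↦ ψ(Φ(x)) − ℝ²₋ at (x̄,0). -/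

import Mathlib

open scoped RealInnerProductSpace Pointwise
open Filter Topology Metric Set Classical

noncomputable section

abbrev Em (m : ℕ) := WithLp 2 (ℝ × EuclideanSpace ℝ (Fin m))

namespace SOC

def mk2 {α β : Type*} (a : α) (b : β) : WithLp 2 (α × β) := (WithLp.equiv 2 (α × β)).symm (a, b)

def Q (m : ℕ) : Set (Em m) := {s | ‖s.ofLp.2‖ ≤ s.ofLp.1}

variable {H : Type*} [NormedAddCommGroup H] [InnerProductSpace ℝ H]

def normalCone (C : Set H) (x : H) : Set H :=
  {y | x ∈ C ∧ ∀ z ∈ C, ⟪y, z - x⟫ ≤ 0}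

def tangentCone (Ω : Set H) (z : H) : Set H :=
  {w | ∃ t : ℕ → ℝ, ∃ wk : ℕ → H, (∀ k, 0 < t k) ∧ Tendsto t atTop (𝓝 0) ∧
    Tendsto wk atTop (𝓝 w) ∧ ∀ k, z + t k • wk k ∈ Ω}

def regularNormalCone (Ω : Set H) (z : H) : Set H :=
  {v | z ∈ Ω ∧ ∀ ε > 0, ∀ᶠ w in 𝓝[Ω \ {z}] z, ⟪v, w - z⟫ ≤ ε * ‖w - z‖}

def limitingNormalCone (Ω : Set H) (z : H) : Set H :=
  {v | ∃ zk : ℕ → H, ∃ vk : ℕ → H, (∀ k, vk k ∈ regularNormalCone Ω (zk k)) ∧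
    Tendsto zk atTop (𝓝 z) ∧ Tendsto vk atTop (𝓝 v)}

variable {n m : ℕ}

/-- The constraint set `Γ = {x | Φ(x) ∈ Q}`. -/
def Gamma (Φ : EuclideanSpace ℝ (Fin n) → Em m) : Set (EuclideanSpace ℝ (Fin n)) :=
  {x | Φ x ∈ Q m}

/-- Metric subregularity constraint qualification with modulus `κ`. -/
def MSCQmod (Φ : EuclideanSpace ℝ (Fin n) → Em m) (xb : EuclideanSpace ℝ (Fin n)) (κ : ℝ) : Prop :=
  ∃ U ∈ 𝓝 xb, ∀ x ∈ U, infDist x (Gamma Φ) ≤ κ * infDist (Φ x) (Q m)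

def MSCQ (Φ : EuclideanSpace ℝ (Fin n) → Em m) (xb : EuclideanSpace ℝ (Fin n)) : Prop :=
  ∃ κ > 0, MSCQmod Φ xb κ

/-- Lagrange multiplier set `Λ(x,x*)`. -/
def Lambda (Φ : EuclideanSpace ℝ (Fin n) → Em m) (x xs : EuclideanSpace ℝ (Fin n)) : Set (Em m) :=
  {lam | lam ∈ normalCone (Q m) (Φ x) ∧ ContinuousLinearMap.adjoint (fderiv ℝ Φ x) lam = xs}

/-- Critical cone `K(x,x*) = T_Γ(x) ∩ {x*}^⊥`. -/
def Kcone (Φ : EuclideanSpace ℝ (Fin n) → Em m) (x xs : EuclideanSpace ℝ (Fin n)) :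
    Set (EuclideanSpace ℝ (Fin n)) :=
  tangentCone (Gamma Φ) x ∩ {v | ⟪xs, v⟫ = 0}

/-- `x ↦ Φ̂(x) = (−Φ₀(x), Φ_r(x))`. -/
def hatFun (Φ : EuclideanSpace ℝ (Fin n) → Em m) (x : EuclideanSpace ℝ (Fin n)) : Em m :=
  mk2 (-(Φ x).ofLp.1) (Φ x).ofLp.2

/-- Hessian of `x ↦ ⟨λ, Φ(x)⟩` at `x`, as a linear map (derivative of the gradient). -/
def hessLam (Φ : EuclideanSpace ℝ (Fin n) → Em m) (x : EuclideanSpace ℝ (Fin n)) (lam : Em m) :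
    EuclideanSpace ℝ (Fin n) →L[ℝ] EuclideanSpace ℝ (Fin n) :=
  fderiv ℝ (fun y => ContinuousLinearMap.adjoint (fderiv ℝ Φ y) lam) x

/-- The curvature term `H(x;λ)`. -/

def Hmap (Φ : EuclideanSpace ℝ (Fin n) → Em m) (x : EuclideanSpace ℝ (Fin n)) (lam : Em m) :
    EuclideanSpace ℝ (Fin n) →L[ℝ] EuclideanSpace ℝ (Fin n) :=
  if Φ x ∈ frontier (Q m) \ {0} then
    (-(lam.ofLp.1 / (Φ x).ofLp.1)) •
      ((ContinuousLinearMap.adjoint (fderiv ℝ (hatFun Φ) x)).comp (fderiv ℝ Φ x))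
  else 0

/-- `∇²⟨λ,Φ⟩(x) + H(x;λ)`. -/
def Gmap (Φ : EuclideanSpace ℝ (Fin n) → Em m) (x : EuclideanSpace ℝ (Fin n)) (lam : Em m) :
    EuclideanSpace ℝ (Fin n) →L[ℝ] EuclideanSpace ℝ (Fin n) :=
  hessLam Φ x lam + Hmap Φ x lam

/-- `Λ(x,x*;v)`: minimizers of `λ ↦ −⟨v, (∇²⟨λ,Φ⟩(x)+H(x;λ))v⟩` over `Λ(x,x*)`. -/
def LambdaV (Φ : EuclideanSpace ℝ (Fin n) → Em m) (x xs v : EuclideanSpace ℝ (Fin n)) :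
    Set (Em m) :=
  {lam ∈ Lambda Φ x xs | ∀ mu ∈ Lambda Φ x xs,
    -⟪v, Gmap Φ x lam v⟫ ≤ -⟪v, Gmap Φ x mu v⟫}

/-- Graph of the limiting normal cone mapping `N_Γ`, inside `ℝ^n × ℝ^n` with the ℓ² norm. -/
def gphNGamma (Φ : EuclideanSpace ℝ (Fin n) → Em m) :
    Set (WithLp 2 (EuclideanSpace ℝ (Fin n) × EuclideanSpace ℝ (Fin n))) :=
  {p | p.ofLp.2 ∈ limitingNormalCone (Gamma Φ) p.ofLp.1}

/-- Second derivative `D²Φ(x)[v,v]`. -/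
def D2 (Φ : EuclideanSpace ℝ (Fin n) → Em m) (x v : EuclideanSpace ℝ (Fin n)) : Em m :=
  fderiv ℝ (fderiv ℝ Φ) x v v

end SOC

namespace SOC

/-- The reduction mapping `ψ(s₀,s_r) = (‖s_r‖² − s₀², −s₀)`, with values in `ℝ²`
equipped with the Euclidean norm. -/
def psi {m : ℕ} (s : Em m) : WithLp 2 (ℝ × ℝ) :=
  mk2 (‖s.ofLp.2‖ ^ 2 - s.ofLp.1 ^ 2) (-s.ofLp.1)

/-- The nonpositive orthant `ℝ²₋ = (−∞,0]²`. -/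
def R2minus : Set (WithLp 2 (ℝ × ℝ)) := {p | p.ofLp.1 ≤ 0 ∧ p.ofLp.2 ≤ 0}

end SOC


lemma le_infDist' {α : Type*} [PseudoMetricSpace α] {x : α} {s : Set α} (hs : s.Nonempty)
    {b : ℝ} (h : ∀ y ∈ s, b ≤ dist x y) : b ≤ Metric.infDist x s := by
  by_contra hc
  push_neg at hc
  obtain ⟨y, hy, hlt⟩ := (Metric.infDist_lt_iff hs).mp hc
  exact absurd (h y hy) (not_le.mpr hlt)

open SOC in
/-- Lemma 4.3: metric subregularity of `x ↦ Φ(x) − Q` at a nonzero boundary point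
propagates to `x ↦ ψ(Φ(x)) − ℝ²₋`. -/
theorem metric_subregularity_propagation_at_nonzero_boundary
    {n m : ℕ} (Φ : EuclideanSpace ℝ (Fin n) → Em m) (hΦ : Continuous Φ)
    (xb : EuclideanSpace ℝ (Fin n)) (hxb : xb ∈ Gamma Φ)
    (hbd : Φ xb ∈ frontier (Q m)) (hnz : Φ xb ≠ 0)
    (κ : ℝ) (hκ : 0 < κ) (U : Set (EuclideanSpace ℝ (Fin n))) (hU : U ∈ nhds xb)
    (hsub : ∀ x ∈ U, Metric.infDist x (Gamma Φ) ≤ κ * Metric.infDist (Φ x) (Q m)) :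
    ∃ κ' > (0 : ℝ), ∃ V ∈ nhds xb, ∀ x ∈ V,
      Metric.infDist x (Gamma Φ) ≤ κ' * Metric.infDist (psi (Φ x)) R2minus := by
  classical
  set t : ℝ := (Φ xb).ofLp.1 with ht_def
  have hxb' : ‖(Φ xb).ofLp.2‖ ≤ t := hxb
  have ht : 0 < t := by
    rcases lt_or_eq_of_le (le_trans (norm_nonneg _) hxb') with h | h
    · exact h
    · exfalso
      apply hnz
      have h2 : (Φ xb).ofLp.2 = 0 := by
        have := hxb'
        rw [← h] at this
        exact norm_le_zero_iff.mp this
      have h1 : (Φ xb).ofLp.1 = 0 := h.symm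
      have : Φ xb = (WithLp.equiv 2 _).symm ((Φ xb).ofLp.1, (Φ xb).ofLp.2) := rfl
      rw [this, h1, h2]
      rfl
  have hcont1 : Continuous fun x => (Φ x).ofLp.1 :=
    ((WithLp.prod_continuous_ofLp 2 ℝ (EuclideanSpace ℝ (Fin m))).comp hΦ).fst
  have hVopen : IsOpen {x : EuclideanSpace ℝ (Fin n) | t / 2 < (Φ x).ofLp.1} :=
    isOpen_lt continuous_const hcont1
  have hxbV : xb ∈ {x : EuclideanSpace ℝ (Fin n) | t / 2 < (Φ x).ofLp.1} := by
    simp only [Set.mem_setOf_eq]; linarith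
  refine ⟨κ / t, by positivity, U ∩ {x | t / 2 < (Φ x).ofLp.1},
    Filter.inter_mem hU (hVopen.mem_nhds hxbV), ?_⟩
  rintro x ⟨hxU, hxV⟩
  have hR2ne : R2minus.Nonempty := ⟨0, le_refl 0, le_refl 0⟩
  have hψnn : 0 ≤ Metric.infDist (psi (Φ x)) R2minus := Metric.infDist_nonneg
  have key : Metric.infDist (Φ x) (Q m) ≤ (1 / t) * Metric.infDist (psi (Φ x)) R2minus := by
    by_cases hQ : Φ x ∈ Q m
    · rw [Metric.infDist_zero_of_mem hQ]
      positivity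
    · set s0 : ℝ := (Φ x).ofLp.1
      set sr := (Φ x).ofLp.2
      have hs0 : t / 2 < s0 := hxV
      have hlt : s0 < ‖sr‖ := not_le.mp hQ
      -- upper bound for dist to Q
      have hq : mk2 ‖sr‖ sr ∈ Q m := show ‖sr‖ ≤ ‖sr‖ from le_refl _
      have hd1 : Metric.infDist (Φ x) (Q m) ≤ ‖sr‖ - s0 := by
        refine le_trans (Metric.infDist_le_dist_of_mem hq) ?_
        rw [WithLp.prod_dist_eq_of_L2]
        have : dist (Φ x).fst (mk2 ‖sr‖ sr).fst = ‖sr‖ - s0 := by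
          show dist s0 ‖sr‖ = ‖sr‖ - s0
          rw [Real.dist_eq, abs_of_nonpos (by linarith)]
          ring
        rw [this]
        have h2 : dist (Φ x).snd (mk2 ‖sr‖ sr).snd = 0 := by
          show dist sr sr = 0; exact dist_self _
        rw [h2]
        rw [show (‖sr‖ - s0) ^ 2 + (0:ℝ) ^ 2 = (‖sr‖ - s0) ^ 2 by ring]
        rw [Real.sqrt_sq (by linarith)]
      -- lower bound for dist of psi to R2minus
      have hψ1 : (psi (Φ x)).fst = ‖sr‖ ^ 2 - s0 ^ 2 := rfl
      have hd2 : ‖sr‖ ^ 2 - s0 ^ 2 ≤ Metric.infDist (psi (Φ x)) R2minus := by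
        refine le_infDist' hR2ne ?_
        intro y hy
        have hy1 : y.fst ≤ 0 := hy.1
        have : ‖sr‖ ^ 2 - s0 ^ 2 ≤ dist (psi (Φ x)).fst y.fst := by
          rw [hψ1, Real.dist_eq]
          calc ‖sr‖ ^ 2 - s0 ^ 2 ≤ (‖sr‖ ^ 2 - s0 ^ 2) - y.fst := by linarith
            _ ≤ |(‖sr‖ ^ 2 - s0 ^ 2) - y.fst| := le_abs_self _
        refine le_trans this ?_
        rw [WithLp.prod_dist_eq_of_L2]
        exact Real.le_sqrt_of_sq_le (by nlinarith [sq_nonneg (dist (psi (Φ x)).snd y.snd)])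
      -- combine
      have hsum : t ≤ ‖sr‖ + s0 := by linarith
      have hfac : (‖sr‖ - s0) * t ≤ ‖sr‖ ^ 2 - s0 ^ 2 := by nlinarith
      rw [div_mul_eq_mul_div, le_div_iff₀ ht, one_mul]
      calc Metric.infDist (Φ x) (Q m) * t ≤ (‖sr‖ - s0) * t := by
            apply mul_le_mul_of_nonneg_right hd1 ht.le
        _ ≤ ‖sr‖ ^ 2 - s0 ^ 2 := hfac
        _ ≤ Metric.infDist (psi (Φ x)) R2minus := hd2
  calc Metric.infDist x (Gamma Φ) ≤ κ * Metric.infDist (Φ x) (Q m) := hsub x hxU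
    _ ≤ κ * ((1 / t) * Metric.infDist (psi (Φ x)) R2minus) :=
        mul_le_mul_of_nonneg_left key hκ.le
    _ = κ / t * Metric.infDist (psi (Φ x)) R2minus := by ring
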